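/- Let Δ = (C, δ) be a building of type (W, S), let P and Q be panels, and let H be a group of automorphisms stabilizing both P and Q such that H fixes no chamber of P. Then P and Q are parallel panels. -/
import Mathlib


noncomputable section
open Classical

namespace BldgPaper

variable {B W : Type*} [Group W] {M : CoxeterMatrix B}

/-- `(W,S)` is 2-complete: `2 < m_{st} < ∞` for all distinct `s,t` (entry `0` codes `∞`). -/
def TwoComplete (M : CoxeterMatrix B) : Prop := ∀ i j : B, i ≠ j → 2 < M i j

/-- `(W,S)` is `Ã₂`-free: no three distinct generators have all pairwise orders equal to `3`. -/
def A2TildeFree (M : CoxeterMatrix B) : Prop :=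
  ∀ i j k : B, i ≠ j → j ≠ k → i ≠ k → ¬ (M i j = 3 ∧ M j k = 3 ∧ M i k = 3)

variable (cs : CoxeterSystem M W) {C : Type*} (δ : C → C → W)

/-- The W-metric building axioms for a distance function `δ` on a set of chambers. -/
structure IsBuilding : Prop where
  nonempty : Nonempty C
  eq_one_iff : ∀ x y, δ x y = 1 ↔ x = y
  step : ∀ x y z (i : B), δ y z = cs.simple i → δ x z = δ x y ∨ δ x z = δ x y * cs.simple i
  step_of_length : ∀ x y z (i : B), δ y z = cs.simple i →
      cs.length (δ x y * cs.simple i) = cs.length (δ x y) + 1 → δ x z = δ x y * cs.simple i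
  exists_step : ∀ x y (i : B), ∃ z, δ y z = cs.simple i ∧ δ x z = δ x y * cs.simple i

/-- The standard parabolic subgroup `⟨J⟩`. -/
def parab (J : Set B) : Subgroup W := Subgroup.closure (cs.simple '' J)

/-- The `J`-residue of the chamber `x`. -/
def residue (J : Set B) (x : C) : Set C := {y | δ x y ∈ parab cs J}

def IsResidue (R : Set C) : Prop := ∃ (J : Set B) (x : C), R = residue cs δ J x

def IsPanel (R : Set C) : Prop := ∃ (i : B) (x : C), R = residue cs δ {i} x

/-- A spherical residue of rank 2. -/
def IsSphRank2 (R : Set C) : Prop :=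
  ∃ (i j : B) (x : C), i ≠ j ∧ (parab cs {i, j} : Set W).Finite ∧ R = residue cs δ {i, j} x

/-- `g` is the gate (projection) of `c` onto the set `R`. -/
def IsGate (R : Set C) (c g : C) : Prop :=
  g ∈ R ∧ ∀ y ∈ R, cs.length (δ c y) = cs.length (δ c g) + cs.length (δ g y)

/-- The projection `proj_R c` of a chamber onto a residue (the gate). -/
noncomputable def proj (R : Set C) (c : C) : C :=
  if h : ∃ g, IsGate cs δ R c g then h.choose else c

/-- `proj_R T = { proj_R t | t ∈ T }`. -/
def projSet (R T : Set C) : Set C := proj cs δ R '' T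

/-- Two residues are parallel if they project onto each other. -/
def Parallel (R T : Set C) : Prop :=
  projSet cs δ R T = R ∧ projSet cs δ T R = T

/-- An apartment: a nonempty, convex and thin set of chambers. -/
def IsApartment (A : Set C) : Prop :=
  A.Nonempty ∧
  (∀ P : Set C, IsPanel cs δ P → (P ∩ A).Nonempty → ∀ c ∈ A, proj cs δ P c ∈ A) ∧
  (∀ P : Set C, IsPanel cs δ P → (P ∩ A).Nonempty → (P ∩ A).ncard = 2)

/-- A root of the apartment `A`: a subset isometric to a half-space `α_i` of `W`. -/
def IsRootOf (A α : Set C) : Prop :=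
  α ⊆ A ∧ ∃ (i : B) (f : C → W),
    Set.BijOn f α {w : W | cs.length w < cs.length (cs.simple i * w)} ∧
    ∀ x ∈ α, ∀ y ∈ α, δ x y = (f x)⁻¹ * f y

/-- `x` and `y` are opposite in the (spherical) residue `R`:
their distance has maximal length among chambers of `R`. -/
def OppChambersIn (R : Set C) (x y : C) : Prop :=
  x ∈ R ∧ y ∈ R ∧ ∀ z ∈ R, cs.length (δ x z) ≤ cs.length (δ x y)

/-- The residues `P` and `Q` are opposite in `R`. -/
def OppResiduesIn (R P Q : Set C) : Prop :=
  P ⊆ R ∧ Q ⊆ R ∧ ∀ p ∈ P, ∃ q ∈ Q, OppChambersIn cs δ R p q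

/-- `(P 0, …, P m)` is a compatible path of panels, where for `1 ≤ i ≤ m` the
set `R i` is the unique rank-2 spherical residue `R(P (i-1), P i)` in which the
consecutive panels `P (i-1)` and `P i` are opposite. -/
def IsCompatiblePath (m : ℕ) (P : ℕ → Set C) (R : ℕ → Set C) : Prop :=
  (∀ i ≤ m, IsPanel cs δ (P i)) ∧
  ∀ i, 1 ≤ i → i ≤ m →
    IsSphRank2 cs δ (R i) ∧ OppResiduesIn cs δ (R i) (P (i-1)) (P i) ∧
    projSet cs δ (R i) (P 0) = P (i-1)

/-- A triangle: three pairwise distinct rank-2 spherical residues whose mutual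
projections are panels (T1), such that the two panels obtained by projecting onto any
one of them are not parallel (T2). -/
def IsTriangle (R₁ R₂ R₃ : Set C) : Prop :=
  R₁ ≠ R₂ ∧ R₂ ≠ R₃ ∧ R₁ ≠ R₃ ∧
  IsSphRank2 cs δ R₁ ∧ IsSphRank2 cs δ R₂ ∧ IsSphRank2 cs δ R₃ ∧
  IsPanel cs δ (projSet cs δ R₁ R₂) ∧ IsPanel cs δ (projSet cs δ R₂ R₁) ∧
  IsPanel cs δ (projSet cs δ R₁ R₃) ∧ IsPanel cs δ (projSet cs δ R₃ R₁) ∧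
  IsPanel cs δ (projSet cs δ R₂ R₃) ∧ IsPanel cs δ (projSet cs δ R₃ R₂) ∧
  ¬ Parallel cs δ (projSet cs δ R₁ R₂) (projSet cs δ R₁ R₃) ∧
  ¬ Parallel cs δ (projSet cs δ R₂ R₁) (projSet cs δ R₂ R₃) ∧
  ¬ Parallel cs δ (projSet cs δ R₃ R₁) (projSet cs δ R₃ R₂)

/-! Coxeter complex notions: the building `(W, δW)` with `δW x y = x⁻¹ * y`. -/

/-- The distance function of the Coxeter complex `Σ(W,S)`. -/
def δW : W → W → W := fun x y => x⁻¹ * y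

/-- The half-space `α_i = {w | ℓ(s_i w) > ℓ(w)}`. -/
def halfspace (i : B) : Set W := {v | cs.length v < cs.length (cs.simple i * v)}

/-- The root `w · α_i` of `(W,S)`. -/
def rootW (w : W) (i : B) : Set W := (w * ·) '' halfspace cs i

/-- `α` is a root with associated reflection `t`. -/
def IsRootPair (α : Set W) (t : W) : Prop :=
  ∃ (w : W) (i : B), α = rootW cs w i ∧ t = w * cs.simple i * w⁻¹

/-- `R` belongs to `∂²α` for a root with reflection `t`: it is a spherical rank-2
residue of the Coxeter complex stabilized by `t`. -/
def MemBd2 (t : W) (R : Set W) : Prop :=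
  IsSphRank2 cs (δW (W := W)) R ∧ (t * ·) '' R = R

/-- `{α 0, α 1, α 2}` (with reflections `t 0, t 1, t 2`) is a combinatorial triangle. -/
def IsCombTriangle (α : Fin 3 → Set W) (t : Fin 3 → W) : Prop :=
  (∀ a, IsRootPair cs (α a) (t a)) ∧
  (∀ a b, a ≠ b → t a ≠ t b) ∧
  (∀ a b : Fin 3, IsOfFinOrder (t a * t b)) ∧
  (¬ ∃ R : Set W, ∀ a, MemBd2 cs (t a) R) ∧
  (∀ a b c : Fin 3, a ≠ b → b ≠ c → a ≠ c →
    ∃ σ : Set W, MemBd2 cs (t b) σ ∧ MemBd2 cs (t c) σ ∧ σ ⊆ α a)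


/-- A (type-preserving) automorphism of the building. -/
def IsAutom (g : Equiv.Perm C) : Prop := ∀ x y, δ (g x) (g y) = δ x y

/-- The simple root `α_i` of the apartment `A` determined by the base chamber `c`. -/
def simpleRootAt (A : Set C) (c : C) (i : B) : Set C :=
  {x ∈ A | cs.length (δ c x) < cs.length (cs.simple i * δ c x)}

/-- `U` is the root group associated with the root `α`: its elements are automorphisms
fixing pointwise every panel meeting `α` in at least two chambers, and it acts simply
transitively on `P \ α` for every panel `P` meeting `α` in exactly one chamber. -/
def IsRootGroup (α : Set C) (U : Subgroup (Equiv.Perm C)) : Prop :=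
  (∀ g ∈ U, IsAutom δ g) ∧
  (∀ g ∈ U, ∀ P : Set C, IsPanel cs δ P → 2 ≤ (P ∩ α).ncard → ∀ x ∈ P, g x = x) ∧
  (∀ P : Set C, IsPanel cs δ P → (P ∩ α).ncard = 1 →
    ∀ x ∈ P \ α, ∀ y ∈ P \ α, ∃! g : Equiv.Perm C, g ∈ U ∧ g x = y)

/-- Opposite chambers in a spherical building: their distance has maximal length in `W`. -/
def OppositeChambers (x y : C) : Prop := ∀ u : W, cs.length u ≤ cs.length (δ x y)

/-- Opposite panels in a spherical building. -/
def OppositePanels (P Q : Set C) : Prop :=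
  (∀ p ∈ P, ∃ q ∈ Q, OppositeChambers cs δ p q) ∧
  (∀ q ∈ Q, ∃ p ∈ P, OppositeChambers cs δ q p)




/-! ### Auxiliary lemmas for Statement 6 -/

section Statement6Aux

variable {cs} {δ}

lemma simple_ne_one' (i : B) : cs.simple i ≠ 1 := by
  intro h
  have h1 := cs.length_simple i
  rw [h, cs.length_one] at h1
  exact one_ne_zero h1.symm

lemma IsBuilding.delta_self (hb : IsBuilding cs δ) (x : C) : δ x x = 1 :=
  (hb.eq_one_iff x x).2 rfl

lemma IsBuilding.adj_symm (hb : IsBuilding cs δ) {x y : C} {i : B}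
    (h : δ x y = cs.simple i) : δ y x = cs.simple i := by
  rcases hb.step y x y i h with h1 | h2
  · exfalso
    rw [hb.delta_self] at h1
    have hxy : y = x := (hb.eq_one_iff y x).1 h1.symm
    rw [← hxy, hb.delta_self] at h
    exact simple_ne_one' i h.symm
  · rw [hb.delta_self] at h2
    have : δ y x = (cs.simple i)⁻¹ := eq_inv_of_mul_eq_one_left h2.symm
    rwa [cs.inv_simple] at this

lemma mem_parab_singleton {i : B} {w : W} :
    w ∈ parab cs {i} ↔ w = 1 ∨ w = cs.simple i := by
  constructor
  · intro h
    unfold parab at h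
    rw [Set.image_singleton] at h
    induction h using Subgroup.closure_induction with
    | mem x hx => exact Or.inr hx
    | one => exact Or.inl rfl
    | mul x y hx hy ihx ihy =>
      rcases ihx with rfl | rfl <;> rcases ihy with rfl | rfl <;>
        simp [cs.simple_mul_simple_self]
    | inv x hx ihx =>
      rcases ihx with rfl | rfl
      · simp
      · simp [cs.inv_simple]
  · rintro (rfl | rfl)
    · exact one_mem _
    · exact Subgroup.subset_closure ⟨i, rfl, rfl⟩

lemma mem_panel_iff {i : B} {x₀ y : C} :
    y ∈ residue cs δ {i} x₀ ↔ δ x₀ y = 1 ∨ δ x₀ y = cs.simple i := by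
  unfold residue
  exact mem_parab_singleton

lemma center_mem_panel (i : B) (x₀ : C) (hb : IsBuilding cs δ) :
    x₀ ∈ residue cs δ {i} x₀ :=
  mem_panel_iff.2 (Or.inl (hb.delta_self x₀))

lemma delta_panel (hb : IsBuilding cs δ) {i : B} {x₀ y z : C}
    (hy : y ∈ residue cs δ {i} x₀) (hz : z ∈ residue cs δ {i} x₀) :
    δ y z = 1 ∨ δ y z = cs.simple i := by
  rcases mem_panel_iff.1 hy with h1 | h2
  · have : x₀ = y := (hb.eq_one_iff x₀ y).1 h1
    rw [← this]; exact mem_panel_iff.1 hz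
  · rcases mem_panel_iff.1 hz with g1 | g2
    · have : x₀ = z := (hb.eq_one_iff x₀ z).1 g1
      rw [← this]
      exact Or.inr (hb.adj_symm h2)
    · rcases hb.step y x₀ z i g2 with e1 | e2
      · rw [e1, hb.adj_symm h2]; exact Or.inr rfl
      · rw [e2, hb.adj_symm h2, cs.simple_mul_simple_self]; exact Or.inl rfl

lemma mem_panel_of_adj (hb : IsBuilding cs δ) {i : B} {x₀ y z : C}
    (hy : y ∈ residue cs δ {i} x₀) (h : δ y z = cs.simple i) :
    z ∈ residue cs δ {i} x₀ := by
  rcases hb.step x₀ y z i h with h1 | h2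
  · rw [mem_panel_iff, h1]; exact mem_panel_iff.1 hy
  · rw [mem_panel_iff, h2]
    rcases mem_panel_iff.1 hy with g1 | g2
    · rw [g1, one_mul]; exact Or.inr rfl
    · rw [g2, cs.simple_mul_simple_self]; exact Or.inl rfl

/-- Existence of minimal galleries. -/
lemma exists_gallery (hb : IsBuilding cs δ) :
    ∀ (n : ℕ) (x y : C), cs.length (δ x y) = n →
    ∃ c : ℕ → C, c 0 = x ∧ c n = y ∧
      ∀ k < n, ∃ i : B, δ (c k) (c (k + 1)) = cs.simple i ∧
        δ x (c (k + 1)) = δ x (c k) * cs.simple i := by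
  intro n
  induction n with
  | zero =>
    intro x y h
    have : x = y := (hb.eq_one_iff x y).1 (cs.length_eq_zero_iff.1 h)
    exact ⟨fun _ => x, rfl, this ▸ rfl, fun k hk => absurd hk (by omega)⟩
  | succ n ih =>
    intro x y h
    have hne : δ x y ≠ 1 := by
      intro h1; rw [h1, cs.length_one] at h; omega
    obtain ⟨i, hi⟩ := cs.exists_rightDescent_of_ne_one hne
    have hlen : cs.length (δ x y * cs.simple i) = n := by
      rcases cs.length_mul_simple (δ x y) i with h1 | h2
      · exfalso; unfold CoxeterSystem.IsRightDescent at hi; omega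
      · omega
    obtain ⟨z, hz1, hz2⟩ := hb.exists_step x y i
    have hz3 : cs.length (δ x z) = n := by rw [hz2]; exact hlen
    obtain ⟨c, hc0, hcn, hstep⟩ := ih x z hz3
    refine ⟨fun k => if k ≤ n then c k else y, by simp [hc0], by simp, ?_⟩
    intro k hk
    by_cases hkn : k < n
    · obtain ⟨j, hj1, hj2⟩ := hstep k hkn
      refine ⟨j, ?_, ?_⟩
      · show δ (if k ≤ n then c k else y) (if k + 1 ≤ n then c (k + 1) else y) = cs.simple j
        rw [if_pos (by omega : k ≤ n), if_pos (by omega : k + 1 ≤ n)]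
        exact hj1
      · show δ x (if k + 1 ≤ n then c (k + 1) else y) = δ x (if k ≤ n then c k else y) * cs.simple j
        rw [if_pos (by omega : k ≤ n), if_pos (by omega : k + 1 ≤ n)]
        exact hj2
    · have hkeq : k = n := by omega
      refine ⟨i, ?_, ?_⟩
      · show δ (if k ≤ n then c k else y) (if k + 1 ≤ n then c (k + 1) else y) = cs.simple i
        rw [if_pos (by omega : k ≤ n), if_neg (by omega : ¬ k + 1 ≤ n), hkeq, hcn]
        exact hb.adj_symm hz1
      · show δ x (if k + 1 ≤ n then c (k + 1) else y) = δ x (if k ≤ n then c k else y) * cs.simple i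
        rw [if_pos (by omega : k ≤ n), if_neg (by omega : ¬ k + 1 ≤ n), hkeq, hcn, hz2,
          cs.simple_mul_simple_cancel_right]

/-- Reversal: `δ y x = (δ x y)⁻¹`. -/
lemma delta_rev (hb : IsBuilding cs δ) (x y : C) : δ y x = (δ x y)⁻¹ := by
  suffices h : ∀ (n : ℕ) (x y : C), cs.length (δ x y) = n → δ y x = (δ x y)⁻¹ from
    h _ x y rfl
  intro n
  induction n using Nat.strong_induction_on with
  | _ n ih =>
    intro x y hn
    obtain ⟨c, hc0, hcn, hstep⟩ := exists_gallery hb n x y hn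
    -- the reverse gallery steps
    have rev : ∀ k < n, ∃ i : B, δ (c (k + 1)) (c k) = cs.simple i ∧
        δ x (c (k + 1)) = δ x (c k) * cs.simple i := by
      intro k hk
      obtain ⟨i, h1, h2⟩ := hstep k hk
      exact ⟨i, hb.adj_symm h1, h2⟩
    -- upper bound along the reverse gallery
    have claim1 : ∀ (j k : ℕ), k + j ≤ n →
        cs.length (δ y (c (n - (k + j)))) ≤ cs.length (δ y (c (n - k))) + j := by
      intro j
      induction j with
      | zero => intro k _; simp
      | succ j ihj =>
        intro k hkj
        rw [show k + (j + 1) = k + j + 1 by omega]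
        have h1 : cs.length (δ y (c (n - (k + j)))) ≤ cs.length (δ y (c (n - k))) + j :=
          ihj k (by omega)
        obtain ⟨i, hrev, _⟩ := rev (n - (k + j + 1)) (by omega)
        have hidx : n - (k + j + 1) + 1 = n - (k + j) := by omega
        rw [hidx] at hrev
        rcases hb.step y (c (n - (k + j))) (c (n - (k + j + 1))) i hrev with e1 | e2
        · rw [e1]; omega
        · rw [e2]
          have := cs.length_mul_le (δ y (c (n - (k + j)))) (cs.simple i)
          rw [cs.length_simple] at this
          omega
    have hyx_le : cs.length (δ y x) ≤ n := by
      have h0 := claim1 n 0 (by omega)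
      rw [Nat.zero_add, Nat.sub_self, Nat.sub_zero, hc0, hcn, hb.delta_self,
        cs.length_one, zero_add] at h0
      exact h0
    by_cases hcase : cs.length (δ y x) = n
    · -- forcing: the reverse gallery is also minimal
      have claim2 : ∀ k ≤ n, cs.length (δ y (c (n - k))) = k := by
        intro k hk
        have hub : cs.length (δ y (c (n - k))) ≤ k := by
          have h0 := claim1 k 0 (by omega)
          rw [Nat.zero_add, Nat.sub_zero, hcn, hb.delta_self,
            cs.length_one, zero_add] at h0
          exact h0
        have hlb : k ≤ cs.length (δ y (c (n - k))) := by
          have := claim1 (n - k) k (by omega)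
          rw [show k + (n - k) = n by omega, Nat.sub_self, hc0] at this
          omega
        omega
      have claim4 : ∀ k ≤ n, δ y (c (n - k)) = (δ x y)⁻¹ * δ x (c (n - k)) := by
        intro k
        induction k with
        | zero =>
          intro _
          simp only [Nat.sub_zero, hcn]
          rw [hb.delta_self, inv_mul_cancel]
        | succ k ihk =>
          intro hk
          have hk' : k ≤ n := by omega
          obtain ⟨i, hadj, hmul⟩ := hstep (n - (k + 1)) (by omega)
          have hidx : n - (k + 1) + 1 = n - k := by omega
          rw [hidx] at hadj hmul
          have hadj' : δ (c (n - k)) (c (n - (k + 1))) = cs.simple i := hb.adj_symm hadj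
          rcases hb.step y (c (n - k)) (c (n - (k + 1))) i hadj' with e1 | e2
          · exfalso
            have l1 := claim2 k hk'
            have l2 := claim2 (k + 1) hk
            rw [e1] at l2
            omega
          · rw [e2, ihk hk', mul_assoc, hmul, mul_assoc,
              cs.simple_mul_simple_self, mul_one]
      have := claim4 n (by omega)
      rw [Nat.sub_self, hc0, hb.delta_self, mul_one] at this
      exact this
    · -- shorter in the other direction: use the induction hypothesis
      have hlt : cs.length (δ y x) < n := by omega
      have := ih (cs.length (δ y x)) hlt y x rfl
      rw [this, inv_inv]

lemma length_delta_rev (hb : IsBuilding cs δ) (x y : C) :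
    cs.length (δ y x) = cs.length (δ x y) := by
  rw [delta_rev hb, cs.length_inv]

/-- The panel gate: existence together with the key step property. -/
lemma exists_panel_gate (hb : IsBuilding cs δ) (i : B) (x₀ c : C) :
    ∃ g ∈ residue cs δ {i} x₀, ∀ y ∈ residue cs δ {i} x₀, y ≠ g →
      δ c y = δ c g * cs.simple i ∧
      cs.length (δ c y) = cs.length (δ c g) + 1 := by
  set P := residue cs δ {i} x₀ with hP
  have hx₀ : x₀ ∈ P := center_mem_panel i x₀ hb
  set N : Set ℕ := {n | ∃ y ∈ P, cs.length (δ c y) = n} with hN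
  have hNne : N.Nonempty := ⟨_, x₀, hx₀, rfl⟩
  obtain ⟨g, hg, hglen⟩ := Nat.sInf_mem hNne
  have hmin : ∀ y ∈ P, sInf N ≤ cs.length (δ c y) := fun y hy =>
    Nat.sInf_le ⟨y, hy, rfl⟩
  have hkey : cs.length (δ c g * cs.simple i) = cs.length (δ c g) + 1 := by
    rcases cs.length_mul_simple (δ c g) i with h1 | h2
    · exact h1
    · exfalso
      obtain ⟨z, hz1, hz2⟩ := hb.exists_step c g i
      have hzP : z ∈ P := mem_panel_of_adj hb hg hz1
      have := hmin z hzP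
      rw [hz2] at this
      omega
  refine ⟨g, hg, ?_⟩
  intro y hy hne
  have hadj : δ g y = cs.simple i := by
    rcases delta_panel hb hg hy with h1 | h2
    · exact absurd ((hb.eq_one_iff g y).1 h1).symm hne
    · exact h2
  have := hb.step_of_length c g y i hadj hkey
  rw [this, hkey]
  exact ⟨rfl, rfl⟩

lemma isGate_of_panel_gate (hb : IsBuilding cs δ) {i : B} {x₀ c g : C}
    (hg : g ∈ residue cs δ {i} x₀)
    (hspec : ∀ y ∈ residue cs δ {i} x₀, y ≠ g →
      δ c y = δ c g * cs.simple i ∧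
      cs.length (δ c y) = cs.length (δ c g) + 1) :
    IsGate cs δ (residue cs δ {i} x₀) c g := by
  refine ⟨hg, ?_⟩
  intro y hy
  by_cases hne : y = g
  · subst hne; rw [hb.delta_self, cs.length_one]; omega
  · obtain ⟨h1, h2⟩ := hspec y hy hne
    have hadj : δ g y = cs.simple i := by
      rcases delta_panel hb hg hy with e1 | e2
      · exact absurd ((hb.eq_one_iff g y).1 e1).symm hne
      · exact e2
    rw [h2, hadj, cs.length_simple]

lemma gate_unique (hb : IsBuilding cs δ) {R : Set C} {c g g' : C}
    (h1 : IsGate cs δ R c g) (h2 : IsGate cs δ R c g') : g = g' := by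
  have e1 := h1.2 g' h2.1
  have e2 := h2.2 g h1.1
  have : cs.length (δ g g') = 0 := by omega
  exact (hb.eq_one_iff g g').1 (cs.length_eq_zero_iff.1 this)

lemma exists_gate_panel (hb : IsBuilding cs δ) (i : B) (x₀ c : C) :
    ∃ g, IsGate cs δ (residue cs δ {i} x₀) c g := by
  obtain ⟨g, hg, hspec⟩ := exists_panel_gate hb i x₀ c
  exact ⟨g, isGate_of_panel_gate hb hg hspec⟩

lemma proj_isGate_panel (hb : IsBuilding cs δ) (i : B) (x₀ c : C) :
    IsGate cs δ (residue cs δ {i} x₀) c (proj cs δ (residue cs δ {i} x₀) c) := by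
  have hex := exists_gate_panel hb i x₀ c
  rw [proj, dif_pos hex]
  exact hex.choose_spec

lemma proj_panel_mem (hb : IsBuilding cs δ) (i : B) (x₀ c : C) :
    proj cs δ (residue cs δ {i} x₀) c ∈ residue cs δ {i} x₀ :=
  (proj_isGate_panel hb i x₀ c).1

lemma proj_panel_min (hb : IsBuilding cs δ) (i : B) (x₀ c : C) {y : C}
    (hy : y ∈ residue cs δ {i} x₀) :
    cs.length (δ c (proj cs δ (residue cs δ {i} x₀) c)) ≤ cs.length (δ c y) := by
  have := (proj_isGate_panel hb i x₀ c).2 y hy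
  omega

lemma proj_eq_of_min (hb : IsBuilding cs δ) (i : B) (x₀ c : C) {y : C}
    (hy : y ∈ residue cs δ {i} x₀)
    (hmin : ∀ z ∈ residue cs δ {i} x₀, cs.length (δ c y) ≤ cs.length (δ c z)) :
    proj cs δ (residue cs δ {i} x₀) c = y := by
  have hG := proj_isGate_panel hb i x₀ c
  have h1 := hG.2 y hy
  have h2 := hmin _ hG.1
  have : cs.length (δ (proj cs δ (residue cs δ {i} x₀) c) y) = 0 := by omega
  exact (hb.eq_one_iff _ y).1 (cs.length_eq_zero_iff.1 this)

/-- The step property of the panel projection. -/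
lemma proj_panel_step (hb : IsBuilding cs δ) (i : B) (x₀ c : C) {y : C}
    (hy : y ∈ residue cs δ {i} x₀) (hne : y ≠ proj cs δ (residue cs δ {i} x₀) c) :
    δ c y = δ c (proj cs δ (residue cs δ {i} x₀) c) * cs.simple i ∧
    cs.length (δ c y) =
      cs.length (δ c (proj cs δ (residue cs δ {i} x₀) c)) + 1 := by
  obtain ⟨g, hg, hspec⟩ := exists_panel_gate hb i x₀ c
  have : proj cs δ (residue cs δ {i} x₀) c = g :=
    gate_unique hb (proj_isGate_panel hb i x₀ c) (isGate_of_panel_gate hb hg hspec)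
  rw [this] at hne ⊢
  exact hspec y hy hne

/-- Equivariance of the panel projection under automorphisms stabilizing the panel. -/
lemma proj_panel_equivariant (hb : IsBuilding cs δ) (i : B) (x₀ : C)
    (g : Equiv.Perm C) (hg : IsAutom δ g)
    (hgP : g '' residue cs δ {i} x₀ = residue cs δ {i} x₀) (c : C) :
    proj cs δ (residue cs δ {i} x₀) (g c) = g (proj cs δ (residue cs δ {i} x₀) c) := by
  set P := residue cs δ {i} x₀ with hP
  set m := proj cs δ P c with hm
  have hGate : IsGate cs δ P c m := proj_isGate_panel hb i x₀ c
  have hGate' : IsGate cs δ P (g c) (g m) := by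
    constructor
    · rw [← hgP]; exact Set.mem_image_of_mem g hGate.1
    · intro y hy
      rw [← hgP] at hy
      obtain ⟨y', hy', rfl⟩ := hy
      rw [hg c y', hg m y', hg c m]
      exact hGate.2 y' hy'
  exact gate_unique hb (proj_isGate_panel hb i x₀ (g c)) hGate'

end Statement6Aux

/-- If a group `H` of automorphisms stabilizes the panels `P` and `Q` and
fixes no chamber of `P`, then `P` and `Q` are parallel. -/
theorem statement6 (hb : IsBuilding cs δ) {P Q : Set C} (hP : IsPanel cs δ P)
    (hQ : IsPanel cs δ Q) (H : Subgroup (Equiv.Perm C)) (hH : ∀ g ∈ H, IsAutom δ g)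
    (hHP : ∀ g ∈ H, g '' P = P) (hHQ : ∀ g ∈ H, g '' Q = Q)
    (hnofix : ∀ c ∈ P, ∃ g ∈ H, g c ≠ c) :
    Parallel cs δ P Q := by
  obtain ⟨iP, xP, rfl⟩ := hP
  obtain ⟨iQ, xQ, rfl⟩ := hQ
  have hxP : xP ∈ residue cs δ {iP} xP := center_mem_panel iP xP hb
  have hxQ : xQ ∈ residue cs δ {iQ} xQ := center_mem_panel iQ xQ hb
  -- two chambers of Q with distinct projections onto P
  have hS : ∃ q₁ ∈ residue cs δ {iQ} xQ, ∃ q₂ ∈ residue cs δ {iQ} xQ,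
      proj cs δ (residue cs δ {iP} xP) q₁ ≠ proj cs δ (residue cs δ {iP} xP) q₂ := by
    by_contra hcon
    push_neg at hcon
    set c := proj cs δ (residue cs δ {iP} xP) xQ with hc
    have hcP : c ∈ residue cs δ {iP} xP := proj_panel_mem hb iP xP xQ
    obtain ⟨g, hgH, hgc⟩ := hnofix c hcP
    have hgxQ : g xQ ∈ residue cs δ {iQ} xQ := by
      rw [← hHQ g hgH]; exact Set.mem_image_of_mem _ hxQ
    have h1 : proj cs δ (residue cs δ {iP} xP) (g xQ) = g c :=
      proj_panel_equivariant hb iP xP g (hH g hgH) (hHP g hgH) xQ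
    have h2 := hcon (g xQ) hgxQ xQ hxQ
    rw [h1] at h2
    exact hgc h2
  obtain ⟨q₁, hq₁, q₂, hq₂, hq12⟩ := hS
  -- minimal distance between the two panels
  set N : Set ℕ := {n | ∃ p ∈ residue cs δ {iP} xP, ∃ q ∈ residue cs δ {iQ} xQ,
    cs.length (δ p q) = n} with hNdef
  have hNne : N.Nonempty := ⟨_, xP, hxP, xQ, hxQ, rfl⟩
  set m := sInf N with hm
  obtain ⟨p₀, hp₀, q₀, hq₀, hw⟩ := Nat.sInf_mem hNne
  have hmin : ∀ p ∈ residue cs δ {iP} xP, ∀ q ∈ residue cs δ {iQ} xQ,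
      m ≤ cs.length (δ p q) := fun p hp q hq => Nat.sInf_le ⟨p, hp, q, hq, rfl⟩
  set w := δ p₀ q₀ with hwdef
  -- the two minimal projections
  have projPq₀ : proj cs δ (residue cs δ {iP} xP) q₀ = p₀ := by
    apply proj_eq_of_min hb iP xP q₀ hp₀
    intro z hz
    rw [length_delta_rev hb p₀ q₀, hw, length_delta_rev hb z q₀]
    exact hmin z hz q₀ hq₀
  have projQp₀ : proj cs δ (residue cs δ {iQ} xQ) p₀ = q₀ := by
    apply proj_eq_of_min hb iQ xQ p₀ hq₀
    intro z hz
    rw [← hwdef, hw]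
    exact hmin p₀ hp₀ z hz
  -- both panels have a chamber different from the minimal pair
  have hexP : ∃ p ∈ residue cs δ {iP} xP, p ≠ p₀ := by
    by_contra hcon
    push_neg at hcon
    have e1 := hcon _ (proj_panel_mem hb iP xP q₁)
    have e2 := hcon _ (proj_panel_mem hb iP xP q₂)
    exact hq12 (e1.trans e2.symm)
  have hexQ : ∃ q ∈ residue cs δ {iQ} xQ, q ≠ q₀ := by
    by_contra hcon
    push_neg at hcon
    rw [hcon q₁ hq₁, hcon q₂ hq₂] at hq12
    exact hq12 rfl
  -- gate step formulas
  have Hp : ∀ p ∈ residue cs δ {iP} xP, p ≠ p₀ →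
      δ q₀ p = w⁻¹ * cs.simple iP ∧ cs.length (δ q₀ p) = m + 1 := by
    intro p hp hne
    have hst := proj_panel_step hb iP xP q₀ hp (by rw [projPq₀]; exact hne)
    rw [projPq₀] at hst
    obtain ⟨e1, e2⟩ := hst
    have hrev : δ q₀ p₀ = w⁻¹ := delta_rev hb p₀ q₀
    rw [hrev] at e1 e2
    have hlm : cs.length (w⁻¹ : W) = m := by rw [cs.length_inv]; exact hw
    rw [hlm] at e2
    exact ⟨e1, e2⟩
  have Hp' : ∀ p ∈ residue cs δ {iP} xP, p ≠ p₀ →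
      δ p q₀ = cs.simple iP * w ∧ cs.length (δ p q₀) = m + 1 := by
    intro p hp hne
    obtain ⟨e1, e2⟩ := Hp p hp hne
    refine ⟨?_, ?_⟩
    · rw [delta_rev hb q₀ p, e1, mul_inv_rev, cs.inv_simple, inv_inv]
    · rw [length_delta_rev hb q₀ p]
      exact e2
  have Hq : ∀ q ∈ residue cs δ {iQ} xQ, q ≠ q₀ →
      δ p₀ q = w * cs.simple iQ ∧ cs.length (δ p₀ q) = m + 1 := by
    intro q hq hne
    have hst := proj_panel_step hb iQ xQ p₀ hq (by rw [projQp₀]; exact hne)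
    rw [projQp₀, ← hwdef] at hst
    obtain ⟨e1, e2⟩ := hst
    rw [hw] at e2
    exact ⟨e1, e2⟩
  have Hq' : ∀ q ∈ residue cs δ {iQ} xQ, q ≠ q₀ →
      δ q p₀ = cs.simple iQ * w⁻¹ ∧ cs.length (δ q p₀) = m + 1 := by
    intro q hq hne
    obtain ⟨e1, e2⟩ := Hq q hq hne
    refine ⟨?_, ?_⟩
    · rw [delta_rev hb p₀ q, e1, mul_inv_rev, cs.inv_simple]
    · rw [length_delta_rev hb p₀ q]
      exact e2
  obtain ⟨p₁, hp₁, hp₁ne⟩ := hexP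
  have hswlen : cs.length (cs.simple iP * w) = m + 1 := by
    have e2 := (Hp p₁ hp₁ hp₁ne).2
    rw [(Hp p₁ hp₁ hp₁ne).1] at e2
    have e : (cs.simple iP * w)⁻¹ = w⁻¹ * cs.simple iP := by
      rw [mul_inv_rev, cs.inv_simple]
    rw [← cs.length_inv, e]
    exact e2
  -- the two cases
  rcases cs.length_mul_simple (cs.simple iP * w) iQ with hplus | hminus
  · -- here the projection of Q onto P is constant: contradiction
    exfalso
    have hconst : ∀ q ∈ residue cs δ {iQ} xQ,
        proj cs δ (residue cs δ {iP} xP) q = p₀ := by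
      intro q hq
      by_cases hke : q = q₀
      · rw [hke]; exact projPq₀
      · apply proj_eq_of_min hb iP xP q hp₀
        intro z hz
        have hq1 : cs.length (δ q p₀) = m + 1 := (Hq' q hq hke).2
        by_cases hz0 : z = p₀
        · rw [hz0]
        · have hzq0 := (Hp' z hz hz0).1
          have hadj : δ q₀ q = cs.simple iQ := by
            rcases delta_panel hb hq₀ hq with f1 | f2
            · exact absurd ((hb.eq_one_iff q₀ q).1 f1).symm hke
            · exact f2
          have hzq : δ z q = δ z q₀ * cs.simple iQ := by
            apply hb.step_of_length z q₀ q iQ hadj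
            rw [hzq0]
            exact hplus
          have hlen : cs.length (δ q z) = m + 2 := by
            rw [length_delta_rev hb z q, hzq, hzq0, hplus, hswlen]
          rw [hq1, hlen]
          omega
    exact hq12 ((hconst q₁ hq₁).trans (hconst q₂ hq₂).symm)
  · -- the parallel case
    have hswt : cs.length (cs.simple iP * w * cs.simple iQ) = m := by omega
    constructor
    · apply Set.Subset.antisymm
      · rintro p ⟨q, hq, rfl⟩
        exact proj_panel_mem hb iP xP q
      · intro p hp
        by_cases hpe : p = p₀
        · exact ⟨q₀, hq₀, by rw [hpe]; exact projPq₀⟩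
        · have hpq₀ := (Hp' p hp hpe).1
          obtain ⟨q, hq1, hq2⟩ := hb.exists_step p q₀ iQ
          have hqQ : q ∈ residue cs δ {iQ} xQ := mem_panel_of_adj hb hq₀ hq1
          have hlen : cs.length (δ p q) = m := by rw [hq2, hpq₀]; exact hswt
          refine ⟨q, hqQ, ?_⟩
          apply proj_eq_of_min hb iP xP q hp
          intro z hz
          rw [length_delta_rev hb p q, hlen, length_delta_rev hb z q]
          exact hmin z hz q hqQ
    · apply Set.Subset.antisymm
      · rintro q ⟨p, hp, rfl⟩
        exact proj_panel_mem hb iQ xQ p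
      · intro q hq
        by_cases hqe : q = q₀
        · exact ⟨p₀, hp₀, by rw [hqe]; exact projQp₀⟩
        · have hqp₀ := (Hq' q hq hqe).1
          obtain ⟨p, hp1, hp2⟩ := hb.exists_step q p₀ iP
          have hpP : p ∈ residue cs δ {iP} xP := mem_panel_of_adj hb hp₀ hp1
          have hlen : cs.length (δ q p) = m := by
            rw [hp2, hqp₀]
            have e : (cs.simple iQ * w⁻¹ * cs.simple iP)⁻¹ =
                cs.simple iP * w * cs.simple iQ := by
              simp [mul_inv_rev, cs.inv_simple, mul_assoc]
            rw [← cs.length_inv, e]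
            exact hswt
          refine ⟨p, hpP, ?_⟩
          apply proj_eq_of_min hb iQ xQ p hq
          intro z hz
          rw [length_delta_rev hb q p, hlen]
          exact hmin p hpP z hz

end BldgPaper
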